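/- arXiv:1112.4889 — 3 statements merged into one kernel-verified Lean document; each statement's English description precedes it below -/
import Mathlib

section
/- Let w be a complex-valued function on representations of a group that is multiplicative on direct sums, and suppose inductivity in degree 0 holds: for a quadratic setting with induction Ind from a subgroup H of index 2 cutting out a character χ, w(Ind W) / w(Ind 1_H)^{dim W} = w_H(W) / w_H(1)^{dim W} for all H-representations W, and Ind 1_H = 1 ⊕ χ. Then for any representation V of the big group of dimension 2g, w(V)·w(V ⊗ χ) = w_H(Res V) · (w(1)·w(χ))^{2g} / w_H(1)^{2g}; in particular if w(1) = w_H(1) = 1 and w(χ)² = χ(−1), then w(V)·w(V⊗χ) = w_H(Res V)·χ(−1)^g. -/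
/-- Formal root-number calculus (Lemma on quadratic twists): model isomorphism
classes of finite-dimensional complex representations of `G` and of an index-2
subgroup `H` by commutative monoids `RG`, `RH` whose multiplication is direct
sum. Given multiplicative root numbers `w : RG → ℂˣ`, `wH : RH → ℂˣ`, an
induction map `Ind : RH → RG`, a restriction `Res : RG → RG`-to-`RH` map, a
dimension function, twisting `tw` by the quadratic character `χ` (with class
`chiG : RG` and value `ε = χ(−1)`), suppose:
* inductivity in degree `0`: `w(Ind W)/w(Ind 1_H)^{dim W} = wH(W)/wH(1_H)^{dim W}`;
* `Ind 1_H = 1 ⊕ χ`;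
* the projection formula `Ind(Res V) = V ⊕ (V ⊗ χ)`;
* `w(1) = wH(1_H) = 1` and `w(χ)² = χ(−1)`.
Then for `V` with `dim Res V = 2g`, `w(V)·w(V ⊗ χ) = wH(Res V)·χ(−1)^g`. -/
theorem stmt9 {RG RH : Type*} [CommMonoid RG] [CommMonoid RH]
    (w : RG → ℂˣ) (wH : RH → ℂˣ)
    (hw : ∀ a b : RG, w (a * b) = w a * w b)
    (hwH : ∀ a b : RH, wH (a * b) = wH a * wH b)
    (Ind : RH → RG) (Res : RG → RH) (tw : RG → RG)
    (dimH : RH → ℕ) (tG : RG) (tH : RH) (chiG : RG) (ε : ℂˣ)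
    (hInd0 : ∀ W : RH,
      w (Ind W) * ((w (Ind tH)) ^ (dimH W))⁻¹ = wH W * ((wH tH) ^ (dimH W))⁻¹)
    (hIndtriv : Ind tH = tG * chiG)
    (htG : w tG = 1) (htH : wH tH = 1)
    (hchi : (w chiG) ^ 2 = ε)
    (V : RG) (g : ℕ)
    (hproj : Ind (Res V) = V * tw V)
    (hdim : dimH (Res V) = 2 * g) :
    w V * w (tw V) = wH (Res V) * ε ^ g := by
  have h := hInd0 (Res V)
  rw [hproj, hdim, hIndtriv, hw, hw, htG, htH, one_mul, one_pow, inv_one, mul_one] at h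
  have : w chiG ^ (2 * g) = ε ^ g := by
    rw [pow_mul, hchi]
  rw [this] at h
  calc w V * w (tw V) = w V * w (tw V) * (ε ^ g)⁻¹ * ε ^ g := by group
    _ = wH (Res V) * ε ^ g := by rw [h]
end

section
/- Let z = (√3 + i)/2 ∈ ℂ (a primitive 12th root of unity) and let α be a complex fourth root of 2√3 − 3. Then β := (z² + z)·α satisfies β⁴ = −2√3 − 3, and the eight roots of x⁸ + 6x⁴ − 3 are i^k·α and i^k·β for k = 0,1,2,3. -/
open Complex

/-- Let `z = (√3 + i)/2` (a primitive 12th root of unity) and let `α` be a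
complex fourth root of `2√3 − 3`. Then `β = (z² + z)·α` satisfies
`β⁴ = −2√3 − 3`, and the eight roots of `x⁸ + 6x⁴ − 3` are `iᵏα` and `iᵏβ` for
`k = 0, 1, 2, 3`. -/
theorem stmt14 (α : ℂ) (hα : α ^ 4 = 2 * (Real.sqrt 3 : ℂ) - 3) :
    let z : ℂ := ((Real.sqrt 3 : ℂ) + I) / 2
    let β : ℂ := (z ^ 2 + z) * α
    β ^ 4 = -2 * (Real.sqrt 3 : ℂ) - 3 ∧
    ∀ x : ℂ, x ^ 8 + 6 * x ^ 4 - 3 =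
      ∏ k ∈ Finset.range 4, ((x - I ^ k * α) * (x - I ^ k * β)) := by
  intro z β
  set t : ℂ := (Real.sqrt 3 : ℂ) with ht_def
  have ht : t ^ 2 = 3 := by
    rw [ht_def]
    norm_cast
    rw [Real.sq_sqrt] ; norm_num
  have hI : I ^ 2 = -1 := I_sq
  have hw : (z ^ 2 + z) ^ 4 = -(7 + 4 * t) := by
    show (((t + I) / 2) ^ 2 + (t + I) / 2) ^ 4 = -(7 + 4 * t)
    have h1 : ((t + I) / 2) ^ 2 + (t + I) / 2 = (1 + t) * (1 + I) / 2 := by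
      linear_combination ht / 4 + hI / 4
    rw [h1]
    linear_combination (-(9:ℂ)/4 - t - t ^ 2 / 4) * ht +
      ((1 + t) ^ 4 * (5 + 4 * I + I ^ 2) / 16) * hI
  have hβ : β ^ 4 = -2 * t - 3 := by
    show ((z ^ 2 + z) * α) ^ 4 = -2 * t - 3
    have : ((z ^ 2 + z) * α) ^ 4 = (z ^ 2 + z) ^ 4 * α ^ 4 := by ring
    rw [this, hw, hα]
    linear_combination (-8 : ℂ) * ht
  refine ⟨hβ, fun x => ?_⟩
  have hprod : ∀ c : ℂ, ∏ k ∈ Finset.range 4, (x - I ^ k * c) = x ^ 4 - c ^ 4 := by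
    intro c
    simp only [Finset.prod_range_succ, Finset.prod_range_zero, one_mul, pow_zero,
      pow_one, pow_succ]
    linear_combination (c ^ 4 - c ^ 4 * I ^ 2 + c ^ 4 * I ^ 4 - x * c ^ 3 * I ^ 3
      - x * c ^ 3 * I ^ 4 + x ^ 2 * c ^ 2 * I + x ^ 2 * c ^ 2 * I ^ 2
      + x ^ 2 * c ^ 2 * I ^ 3 - x ^ 3 * c - x ^ 3 * c * I) * hI
  calc x ^ 8 + 6 * x ^ 4 - 3 = (x ^ 4 - α ^ 4) * (x ^ 4 - β ^ 4) := by
        rw [hα, hβ]; linear_combination (4 : ℂ) * ht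
    _ = ∏ k ∈ Finset.range 4, ((x - I ^ k * α) * (x - I ^ k * β)) := by
        rw [Finset.prod_mul_distrib, hprod α, hprod β]
end

section
/- Neither x⁴ + (4/3)x³ + x² + (4/3)x + 1 nor x⁴ + x³ + (16/9)x² + x + 1 has a monic irreducible factor in ℤ[x] with constant term 1; equivalently, no root of either polynomial is an algebraic integer all of whose conjugates multiply to ±1 with minimal polynomial monic with constant coefficient 1. Concretely: neither polynomial has a root that is a root of a monic polynomial in ℤ[x] with constant term 1 dividing it in ℚ[x]. -/
open Polynomial

private lemma monic_natDegree_two {R : Type*} [Semiring R] {p : R[X]} (hp : p.Monic)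
    (h2 : p.natDegree = 2) : p = X ^ 2 + C (p.coeff 1) * X + C (p.coeff 0) := by
  ext n
  rcases n with _ | _ | _ | n
  · simp
  · simp
  · have : p.coeff 2 = 1 := by
      have := hp.coeff_natDegree
      rwa [h2] at this
    simp [this, coeff_X_pow]
  · rw [coeff_eq_zero_of_natDegree_lt (by omega)]
    simp [coeff_X_pow]

/-- The remainder of `X⁴ + aX³ + cX² + aX + 1` mod `X² + βX + 1`. -/
private lemma rem_eq (a c β : ℚ)
    (h : (X ^ 2 + C β * X + 1) ∣ (X ^ 4 + C a * X ^ 3 + C c * X ^ 2 + C a * X + 1)) :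
    2 - c + a * β - β ^ 2 = 0 := by
  set d : ℚ[X] := X ^ 2 + C β * X + 1 with hd
  obtain ⟨q, hq⟩ := h
  have key : (X ^ 4 + C a * X ^ 3 + C c * X ^ 2 + C a * X + 1 : ℚ[X]) =
      d * (X ^ 2 + (C a - C β) * X + (C c - 1 - C a * C β + C β ^ 2)) +
      ((C β * (2 - C c + C a * C β - C β ^ 2)) * X + (2 - C c + C a * C β - C β ^ 2)) := by
    rw [hd]; ring
  have hdvdR : d ∣ ((C β * (2 - C c + C a * C β - C β ^ 2)) * X +
      (2 - C c + C a * C β - C β ^ 2)) := by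
    exact ⟨q - (X ^ 2 + (C a - C β) * X + (C c - 1 - C a * C β + C β ^ 2)), by
      linear_combination hq - key⟩
  have hdeg : ((C β * (2 - C c + C a * C β - C β ^ 2)) * X +
      (2 - C c + C a * C β - C β ^ 2) : ℚ[X]) = 0 := by
    apply eq_zero_of_dvd_of_degree_lt hdvdR
    have hdd : d.degree = 2 := by rw [hd]; compute_degree!
    rw [hdd]
    apply lt_of_le_of_lt (b := (1 : WithBot ℕ))
    · compute_degree
    · decide
  have h0 := congrArg (Polynomial.eval 0) hdeg
  simp only [eval_add, eval_mul, eval_sub, eval_pow, eval_X, eval_C, eval_one, eval_zero,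
    eval_ofNat, mul_zero, zero_add, add_zero] at h0
  linarith

private lemma no_int_factor (p : ℚ[X]) (hpm : p.Monic) (hdeg : p.natDegree = 4)
    (hp0 : p.coeff 0 = 1) (k : ℕ) (hk : ∀ z : ℤ, (z : ℚ) ≠ p.coeff k)
    (hev : p.eval (-1) ≠ 0)
    (hq2 : ∀ b : ℤ, ¬ ((X ^ 2 + C (b : ℚ) * X + 1) ∣ p)) :
    ¬ ∃ g : Polynomial ℤ, g.Monic ∧ Irreducible g ∧ g.coeff 0 = 1 ∧
      (g.map (Int.castRingHom ℚ)) ∣ p := by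
  rintro ⟨g, hm, hirr, h0, hdvd⟩
  have hroot : ¬ p.IsRoot (-1) := hev
  have gm : (g.map (Int.castRingHom ℚ)).Monic := hm.map _
  obtain ⟨q, hq⟩ := hdvd
  have hqm : q.Monic := gm.of_mul_monic_left (hq ▸ hpm)
  have hdegs : g.natDegree + q.natDegree = 4 := by
    have h1 : (g.map (Int.castRingHom ℚ)).natDegree + q.natDegree = 4 := by
      rw [← natDegree_mul gm.ne_zero hqm.ne_zero, ← hq, hdeg]
    rwa [hm.natDegree_map] at h1
  have hg1 : 1 ≤ g.natDegree := by
    by_contra h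
    have : g.natDegree = 0 := by omega
    exact hirr.not_isUnit ((hm.natDegree_eq_zero.mp this) ▸ isUnit_one)
  have hg4 : g.natDegree ≤ 4 := by omega
  interval_cases hn : g.natDegree
  · -- degree 1
    have hgeq : g = X + C 1 := by rw [← h0]; exact hm.eq_X_add_C hn
    have hdvd' : (X - C (-1 : ℚ)) ∣ p := by
      have : g.map (Int.castRingHom ℚ) = X - C (-1 : ℚ) := by
        rw [hgeq]; simp [Polynomial.map_add]
      exact this ▸ ⟨q, hq⟩
    exact hroot (dvd_iff_isRoot.mp hdvd')
  · -- degree 2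
    have hgeq : g = X ^ 2 + C (g.coeff 1) * X + C 1 := by
      rw [← h0]; exact monic_natDegree_two hm hn
    refine hq2 (g.coeff 1) ?_
    have : g.map (Int.castRingHom ℚ) = X ^ 2 + C ((g.coeff 1 : ℤ) : ℚ) * X + 1 := by
      rw [hgeq]
      simp [Polynomial.map_add, Polynomial.map_mul, Polynomial.map_pow, map_one, coeff_one]
    exact this ▸ ⟨q, hq⟩
  · -- degree 3
    have hqd : q.natDegree = 1 := by omega
    have hq0 : q.coeff 0 = 1 := by
      have := congrArg (fun r : ℚ[X] => r.coeff 0) hq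
      simp only [mul_coeff_zero, coeff_map, h0, hp0] at this
      simpa using this.symm
    have hqeq : q = X - C (-1 : ℚ) := by
      have := hqm.eq_X_add_C hqd
      rw [hq0] at this
      rw [this]; simp [sub_neg_eq_add]
    have hdvd' : (X - C (-1 : ℚ)) ∣ p := ⟨g.map (Int.castRingHom ℚ), by rw [hq, hqeq]; ring⟩
    exact hroot (dvd_iff_isRoot.mp hdvd')
  · -- degree 4
    have hqd : q.natDegree = 0 := by omega
    have hq1 : q = 1 := hqm.natDegree_eq_zero.mp hqd
    have : p = g.map (Int.castRingHom ℚ) := by rw [hq, hq1, mul_one]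
    refine hk (g.coeff k) ?_
    rw [this, coeff_map]
    simp

/-- Neither `x⁴ + (4/3)x³ + x² + (4/3)x + 1` nor `x⁴ + x³ + (16/9)x² + x + 1`
has a monic irreducible factor in `ℤ[x]` with constant term `1` (dividing it in
`ℚ[x]`). -/
theorem stmt16 :
    (¬ ∃ g : Polynomial ℤ, g.Monic ∧ Irreducible g ∧ g.coeff 0 = 1 ∧
      (g.map (Int.castRingHom ℚ)) ∣
        (X ^ 4 + C (4/3 : ℚ) * X ^ 3 + X ^ 2 + C (4/3 : ℚ) * X + 1)) ∧
    (¬ ∃ g : Polynomial ℤ, g.Monic ∧ Irreducible g ∧ g.coeff 0 = 1 ∧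
      (g.map (Int.castRingHom ℚ)) ∣
        (X ^ 4 + X ^ 3 + C (16/9 : ℚ) * X ^ 2 + X + 1)) := by
  constructor
  · refine no_int_factor _ ?_ ?_ ?_ 3 ?_ ?_ ?_
    · monicity!
    · compute_degree!
    · simp
    · intro z h
      have hc : (X ^ 4 + C (4/3 : ℚ) * X ^ 3 + X ^ 2 + C (4/3 : ℚ) * X + 1 : ℚ[X]).coeff 3
          = 4/3 := by simp [coeff_X_pow, coeff_one]
      rw [hc] at h
      have h3 : ((3 * z : ℤ) : ℚ) = ((4 : ℤ) : ℚ) := by push_cast; linear_combination 3 * h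
      have : (3 * z : ℤ) = 4 := by exact_mod_cast h3
      omega
    · simp only [eval_add, eval_mul, eval_pow, eval_X, eval_C, eval_one]
      norm_num
    · intro b hb
      have h1 : (X ^ 4 + C (4/3 : ℚ) * X ^ 3 + X ^ 2 + C (4/3 : ℚ) * X + 1 : ℚ[X]) =
          X ^ 4 + C (4/3 : ℚ) * X ^ 3 + C (1 : ℚ) * X ^ 2 + C (4/3 : ℚ) * X + 1 := by simp
      rw [h1] at hb
      have := rem_eq (4/3) 1 ((b : ℚ)) hb
      have hzq : (3 : ℚ) + 4 * (b : ℚ) - 3 * (b : ℚ) ^ 2 = 0 := by linear_combination 3 * this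
      have hz : (3 : ℤ) + 4 * b - 3 * b ^ 2 = 0 := by exact_mod_cast hzq
      have hb1 : -1 ≤ b := by nlinarith
      have hb2 : b ≤ 2 := by nlinarith
      interval_cases b <;> omega
  · refine no_int_factor _ ?_ ?_ ?_ 2 ?_ ?_ ?_
    · monicity!
    · compute_degree!
    · simp
    · intro z h
      have hc : (X ^ 4 + X ^ 3 + C (16/9 : ℚ) * X ^ 2 + X + 1 : ℚ[X]).coeff 2
          = 16/9 := by simp [coeff_X_pow, coeff_one, coeff_X]
      rw [hc] at h
      have h3 : ((9 * z : ℤ) : ℚ) = ((16 : ℤ) : ℚ) := by push_cast; linear_combination 9 * h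
      have : (9 * z : ℤ) = 16 := by exact_mod_cast h3
      omega
    · simp only [eval_add, eval_mul, eval_pow, eval_X, eval_C, eval_one]
      norm_num
    · intro b hb
      have h1 : (X ^ 4 + X ^ 3 + C (16/9 : ℚ) * X ^ 2 + X + 1 : ℚ[X]) =
          X ^ 4 + C (1 : ℚ) * X ^ 3 + C (16/9 : ℚ) * X ^ 2 + C (1 : ℚ) * X + 1 := by simp
      rw [h1] at hb
      have := rem_eq 1 (16/9) ((b : ℚ)) hb
      have hzq : (2 : ℚ) + 9 * (b : ℚ) - 9 * (b : ℚ) ^ 2 = 0 := by linear_combination 9 * this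
      have hz : (2 : ℤ) + 9 * b - 9 * b ^ 2 = 0 := by exact_mod_cast hzq
      have h3 : (3 : ℤ) ∣ 2 := ⟨3 * b ^ 2 - 3 * b, by linarith⟩
      norm_num at h3
end
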